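/- arXiv:1601.06626 — 5 statements merged into one kernel-verified Lean document; each statement's English description precedes it below -/
import Mathlib

section
/- Let K be a field, n a natural number, and I an ideal of K[x_1,...,x_n] such that the quotient K[x_1,...,x_n]/I is a finite-dimensional K-vector space. Let a = (a_1,...,a_n) ∈ K^n be a point of the zero set Zero(I), and let f ∈ K[x_1,...,x_n]. Then the scalar f(a) (the evaluation of f at a) is an eigenvalue of the multiplication operator m_f : K[x_1,...,x_n]/I → K[x_1,...,x_n]/I defined by m_f([g]) = [f·g]. -/
theorem eval_is_eigenvalue_of_mulLeft (K : Type*) [Field K] (n : ℕ)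
    (I : Ideal (MvPolynomial (Fin n) K))
    [FiniteDimensional K (MvPolynomial (Fin n) K ⧸ I)]
    (a : Fin n → K) (ha : a ∈ MvPolynomial.zeroLocus K I)
    (f : MvPolynomial (Fin n) K) :
    Module.End.HasEigenvalue
      (LinearMap.mulLeft K (Ideal.Quotient.mk I f) :
        Module.End K (MvPolynomial (Fin n) K ⧸ I))
      (MvPolynomial.eval a f) := by
  set A := MvPolynomial (Fin n) K ⧸ I
  -- the evaluation map descends to the quotient
  have hker : ∀ p ∈ I, MvPolynomial.eval a p = 0 := by
    intro p hp; exact (MvPolynomial.mem_zeroLocus_iff.mp ha) p hp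
  let φ : A →+* K := Ideal.Quotient.lift I (MvPolynomial.eval a) hker
  rw [Module.End.hasEigenvalue_iff_mem_spectrum, spectrum.mem_iff]
  intro hu
  have heq : (algebraMap K (Module.End K A) (MvPolynomial.eval a f) -
      (LinearMap.mulLeft K (Ideal.Quotient.mk I f) : Module.End K A)) =
      Algebra.lmul K A (algebraMap K A (MvPolynomial.eval a f) - Ideal.Quotient.mk I f) := by
    rw [map_sub, AlgHom.commutes]
    rfl
  rw [heq, Algebra.lmul_isUnit_iff] at hu
  have := hu.map φ
  have hφ : φ (algebraMap K A (MvPolynomial.eval a f) - Ideal.Quotient.mk I f) = 0 := by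
    have h1 : algebraMap K A (MvPolynomial.eval a f) =
        Ideal.Quotient.mk I (MvPolynomial.C (MvPolynomial.eval a f)) := rfl
    rw [map_sub, h1, Ideal.Quotient.lift_mk, Ideal.Quotient.lift_mk, MvPolynomial.eval_C, sub_self]
  rw [hφ] at this
  exact this.ne_zero rfl
end

section
/- Let K be an algebraically closed field, n a natural number, and I a radical ideal of K[x_1,...,x_n] whose quotient K[x_1,...,x_n]/I is a nonzero finite-dimensional K-vector space. Fix i ∈ {1,...,n} and let m_{x_i} denote the multiplication-by-x_i operator on K[x_1,...,x_n]/I. Then a scalar λ ∈ K is a root of the characteristic polynomial of m_{x_i} if and only if there exists a point a = (a_1,...,a_n) in the zero set Zero(I) with a_i = λ. -/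
open Polynomial Matrix

lemma aux_isRoot_charpoly_iff {K V : Type*} [Field K] [AddCommGroup V] [Module K V]
    [FiniteDimensional K V] (φ : Module.End K V) (μ : K) :
    φ.charpoly.IsRoot μ ↔ ∃ v : V, v ≠ 0 ∧ φ v = μ • v := by
  classical
  let b := Module.Free.chooseBasis K V
  set M := LinearMap.toMatrix b b φ with hM
  have h1 : φ.charpoly = M.charpoly := (LinearMap.charpoly_toMatrix φ b).symm
  have h2 : M.charpoly.eval μ = (Matrix.scalar _ μ - M).det := by
    rw [Matrix.charpoly, _root_.eval_det, matPolyEquiv_charmatrix]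
    simp
  have h3 : Matrix.scalar _ μ - M = LinearMap.toMatrix b b (μ • (1 : Module.End K V) - φ) := by
    rw [map_sub, _root_.map_smul, LinearMap.toMatrix_one]
    congr 1
    ext j k
    simp [Matrix.scalar, Matrix.smul_apply, Matrix.one_apply, Matrix.diagonal]
  have h4 : LinearMap.det (μ • (1 : Module.End K V) - φ) = (Matrix.scalar _ μ - M).det := by
    rw [h3, LinearMap.det_toMatrix]
  have h5 := (LinearMap.hasEigenvalue_zero_tfae (μ • (1 : Module.End K V) - φ)).out 3 5
  rw [Polynomial.IsRoot, h1, h2, ← h4, h5]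
  constructor
  · rintro ⟨v, hv, h⟩
    simp only [LinearMap.sub_apply, LinearMap.smul_apply, Module.End.one_apply,
      sub_eq_zero] at h
    exact ⟨v, hv, h.symm⟩
  · rintro ⟨v, hv, h⟩
    refine ⟨v, hv, ?_⟩
    simp [LinearMap.sub_apply, h, sub_eq_zero]

theorem charpoly_roots_eq_coords (K : Type*) [Field K] [IsAlgClosed K] (n : ℕ)
    (I : Ideal (MvPolynomial (Fin n) K)) (hI : I.IsRadical)
    [FiniteDimensional K (MvPolynomial (Fin n) K ⧸ I)]
    [Nontrivial (MvPolynomial (Fin n) K ⧸ I)]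
    (i : Fin n) (lam : K) :
    (LinearMap.charpoly
        (LinearMap.mulLeft K (Ideal.Quotient.mk I (MvPolynomial.X i)) :
          Module.End K (MvPolynomial (Fin n) K ⧸ I))).IsRoot lam ↔
      ∃ a ∈ MvPolynomial.zeroLocus K I, a i = lam := by
  classical
  have hIvan : I = MvPolynomial.vanishingIdeal K (MvPolynomial.zeroLocus K I) := by
    rw [MvPolynomial.vanishingIdeal_zeroLocus_eq_radical, hI.radical]
  have hCsmul : ∀ (c : K) (g : MvPolynomial (Fin n) K),
      Ideal.Quotient.mk I (MvPolynomial.C c * g) = c • Ideal.Quotient.mk I g := by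
    intro c g
    rw [← MvPolynomial.smul_eq_C_mul]
    have h := _root_.map_smul (Ideal.Quotient.mkₐ K I) c g
    rwa [Ideal.Quotient.mkₐ_eq_mk] at h
  rw [aux_isRoot_charpoly_iff]
  constructor
  · rintro ⟨v, hv, hφv⟩
    obtain ⟨g, rfl⟩ := Ideal.Quotient.mk_surjective v
    have hg : g ∉ I := fun h => hv (Ideal.Quotient.eq_zero_iff_mem.mpr h)
    have hmem : (MvPolynomial.X i - MvPolynomial.C lam) * g ∈ I := by
      rw [← Ideal.Quotient.eq_zero_iff_mem]
      simp only [LinearMap.mulLeft_apply] at hφv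
      rw [_root_.map_mul, map_sub, sub_mul, hφv]
      rw [← _root_.map_mul, hCsmul, sub_self]
    have hgv : g ∉ MvPolynomial.vanishingIdeal K (MvPolynomial.zeroLocus K I) := hIvan ▸ hg
    rw [MvPolynomial.mem_vanishingIdeal_iff] at hgv
    push_neg at hgv
    obtain ⟨a, ha, hga⟩ := hgv
    refine ⟨a, ha, ?_⟩
    have h0 : MvPolynomial.eval a ((MvPolynomial.X i - MvPolynomial.C lam) * g) = 0 :=
      (MvPolynomial.mem_zeroLocus_iff.mp ha) _ hmem
    simp only [_root_.map_mul, map_sub, MvPolynomial.eval_X, MvPolynomial.eval_C] at h0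
    rcases mul_eq_zero.mp h0 with h | h
    · exact sub_eq_zero.mp h
    · exact absurd h hga
  · rintro ⟨a, ha, rfl⟩
    set φ' : Module.End K (MvPolynomial (Fin n) K ⧸ I) :=
      a i • (1 : Module.End K (MvPolynomial (Fin n) K ⧸ I))
        - LinearMap.mulLeft K (Ideal.Quotient.mk I (MvPolynomial.X i)) with hφ'
    have hkey : ∀ g : MvPolynomial (Fin n) K,
        φ' (Ideal.Quotient.mk I g)
          = Ideal.Quotient.mk I ((MvPolynomial.C (a i) - MvPolynomial.X i) * g) := by
      intro g
      simp only [hφ', LinearMap.sub_apply, LinearMap.smul_apply, Module.End.one_apply,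
        LinearMap.mulLeft_apply, sub_mul, map_sub, _root_.map_mul]
      congr 1
      rw [← _root_.map_mul, hCsmul]
    have hnsurj : ¬ Function.Surjective φ' := by
      intro hs
      obtain ⟨w, hw⟩ := hs 1
      obtain ⟨g, rfl⟩ := Ideal.Quotient.mk_surjective w
      have : MvPolynomial.eval a ((MvPolynomial.C (a i) - MvPolynomial.X i) * g - 1) = 0 := by
        apply (MvPolynomial.mem_zeroLocus_iff.mp ha)
        rw [← Ideal.Quotient.eq_zero_iff_mem, map_sub, ← hkey, hw, _root_.map_one, sub_self]
      simp [mul_comm] at this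
    have hninj : ¬ Function.Injective φ' := fun h =>
      hnsurj ((LinearMap.injective_iff_surjective).mp h)
    have : LinearMap.ker φ' ≠ ⊥ := fun h => hninj (LinearMap.ker_eq_bot.mp h)
    obtain ⟨v, hvmem, hv⟩ := Submodule.ne_bot_iff _ |>.mp this
    refine ⟨v, hv, ?_⟩
    have : φ' v = 0 := hvmem
    simp only [hφ', LinearMap.sub_apply, LinearMap.smul_apply, Module.End.one_apply,
      sub_eq_zero] at this
    exact this.symm
end

section
/- Let K be an algebraically closed field, n a natural number, and I a radical ideal of K[x_1,...,x_n] whose quotient K[x_1,...,x_n]/I is a nonzero finite-dimensional K-vector space. For each k ∈ {1,...,n}, let f_k denote the characteristic polynomial of the multiplication-by-x_k operator m_{x_k} on K[x_1,...,x_n]/I, and let S_k = {a_k : a ∈ Zero(I)} be the set of k-th coordinates of points of the zero set. If f_i = f_j for indices i, j, then S_i = S_j. -/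
open Polynomial

lemma isRoot_charpoly_iff_exists {K V : Type*} [Field K] [AddCommGroup V] [Module K V]
    [FiniteDimensional K V] (f : Module.End K V) (μ : K) :
    f.charpoly.IsRoot μ ↔ ∃ v : V, v ≠ 0 ∧ f v = μ • v := by
  classical
  constructor
  · intro h
    have hdet : LinearMap.det (μ • (1 : Module.End K V) - f) = 0 := by
      let b := Module.Free.chooseBasis K V
      have h1 : f.charpoly = (LinearMap.toMatrix b b f).charpoly :=
        (LinearMap.charpoly_toMatrix f b).symm
      rw [h1] at h
      have h2 : Polynomial.eval μ (LinearMap.toMatrix b b f).charpoly =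
          Matrix.det (μ • (1 : Matrix _ _ K) - LinearMap.toMatrix b b f) := by
        rw [Matrix.charpoly, _root_.eval_det, Matrix.matPolyEquiv_charmatrix]
        simp only [Matrix.scalar, Matrix.smul_one_eq_diagonal, Polynomial.eval_sub,
          Polynomial.eval_X, Polynomial.eval_C]
        congr 1
      rw [← LinearMap.det_toMatrix b]
      have h3 : LinearMap.toMatrix b b (μ • (1 : Module.End K V) - f) =
          μ • (1 : Matrix _ _ K) - LinearMap.toMatrix b b f := by
        simp [LinearMap.toMatrix_one]
      rw [h3, ← h2]
      exact h
    have hk := LinearMap.bot_lt_ker_of_det_eq_zero hdet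
    obtain ⟨v, hvmem, hv0⟩ := (Submodule.ne_bot_iff _).1 hk.ne'
    refine ⟨v, hv0, ?_⟩
    have := hvmem
    rw [LinearMap.mem_ker] at this
    simp only [LinearMap.sub_apply, LinearMap.smul_apply, Module.End.one_apply] at this
    exact (sub_eq_zero.1 this).symm
  · rintro ⟨v, hv0, hfv⟩
    have he : f.HasEigenvalue μ :=
      Module.End.hasEigenvalue_of_hasEigenvector ⟨Module.End.mem_eigenspace_iff.2 hfv, hv0⟩
    exact (Module.End.hasEigenvalue_iff_isRoot.mp he).dvd (LinearMap.minpoly_dvd_charpoly f)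

set_option maxHeartbeats 1000000 in
lemma coord_iff_isRoot (K : Type*) [Field K] [IsAlgClosed K] (n : ℕ)
    (I : Ideal (MvPolynomial (Fin n) K)) (hI : I.IsRadical)
    [FiniteDimensional K (MvPolynomial (Fin n) K ⧸ I)]
    (k : Fin n) (μ : K) :
    (∃ a ∈ MvPolynomial.zeroLocus K I, a k = μ) ↔
    (LinearMap.charpoly
      (LinearMap.mulLeft K (Ideal.Quotient.mk I (MvPolynomial.X k)) :
        Module.End K (MvPolynomial (Fin n) K ⧸ I))).IsRoot μ := by
  set m : Module.End K (MvPolynomial (Fin n) K ⧸ I) :=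
    LinearMap.mulLeft K (Ideal.Quotient.mk I (MvPolynomial.X k)) with hm
  rw [isRoot_charpoly_iff_exists]
  constructor
  · rintro ⟨a, ha, rfl⟩
    have hvan : ∀ p ∈ I, MvPolynomial.aeval a p = 0 := by
      intro p hp
      have := MvPolynomial.mem_zeroLocus_iff.1 ha p hp
      exact this
    let φ : (MvPolynomial (Fin n) K ⧸ I) →ₐ[K] K :=
      Ideal.Quotient.liftₐ I (MvPolynomial.aeval a) hvan
    have heval : ∀ p, φ (Ideal.Quotient.mk I p) = MvPolynomial.eval a p := by
      intro p
      rw [← MvPolynomial.coe_aeval_eq_eval]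
      rfl
    have hφm : ∀ q, φ (m q - (a k) • q) = 0 := by
      intro q
      obtain ⟨g, rfl⟩ := Ideal.Quotient.mk_surjective q
      have hmq : m (Ideal.Quotient.mk I g) = Ideal.Quotient.mk I (MvPolynomial.X k * g) := by
        rw [hm, LinearMap.mulLeft_apply, ← map_mul]
      have hsm : (a k) • Ideal.Quotient.mk I g =
          Ideal.Quotient.mk I (MvPolynomial.C (a k) * g) := by
        rw [map_mul, ← MvPolynomial.algebraMap_eq, Ideal.Quotient.mk_algebraMap,
          ← Algebra.smul_def]
      rw [hmq, hsm, map_sub, heval, heval, map_mul, map_mul, MvPolynomial.eval_X,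
        MvPolynomial.eval_C, sub_self]
    set ψ : Module.End K (MvPolynomial (Fin n) K ⧸ I) :=
      m - (a k) • (LinearMap.id : (MvPolynomial (Fin n) K ⧸ I) →ₗ[K] _) with hψ
    have hψap : ∀ q, ψ q = m q - (a k) • q := by
      intro q
      simp [hψ]
    have hninj : ¬ Function.Injective ψ := by
      intro hinj
      have hsurj := (LinearMap.injective_iff_surjective).1 hinj
      obtain ⟨q, hq⟩ := hsurj 1
      have h0 := hφm q
      rw [← hψap, hq, map_one] at h0
      exact one_ne_zero h0
    rw [← LinearMap.ker_eq_bot] at hninj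
    obtain ⟨v, hvmem, hv0⟩ := (Submodule.ne_bot_iff _).1 hninj
    refine ⟨v, hv0, ?_⟩
    rw [LinearMap.mem_ker, hψap] at hvmem
    exact sub_eq_zero.1 hvmem
  · rintro ⟨v, hv0, hmv⟩
    obtain ⟨g, rfl⟩ := Ideal.Quotient.mk_surjective v
    have hgI : g ∉ I := fun hgI => hv0 (Ideal.Quotient.eq_zero_iff_mem.2 hgI)
    have hmem : (MvPolynomial.X k - MvPolynomial.C μ) * g ∈ I := by
      have h1 : Ideal.Quotient.mk I ((MvPolynomial.X k - MvPolynomial.C μ) * g) =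
          m (Ideal.Quotient.mk I g) - μ • Ideal.Quotient.mk I g := by
        rw [sub_mul, map_sub, hm, LinearMap.mulLeft_apply, ← map_mul]
        congr 1
        rw [map_mul, ← MvPolynomial.algebraMap_eq, Ideal.Quotient.mk_algebraMap,
          ← Algebra.smul_def]
      rw [← Ideal.Quotient.eq_zero_iff_mem, h1, hmv, sub_self]
    have hIvan : MvPolynomial.vanishingIdeal K (MvPolynomial.zeroLocus K I) = I := by
      rw [MvPolynomial.vanishingIdeal_zeroLocus_eq_radical, hI.radical]
    have hg : g ∉ MvPolynomial.vanishingIdeal K (MvPolynomial.zeroLocus K I) := by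
      rw [hIvan]; exact hgI
    rw [MvPolynomial.mem_vanishingIdeal_iff] at hg
    push_neg at hg
    obtain ⟨a, ha, hga⟩ := hg
    refine ⟨a, ha, ?_⟩
    have h0 := MvPolynomial.mem_zeroLocus_iff.1 ha _ hmem
    simp only [map_mul, map_sub, MvPolynomial.aeval_X, MvPolynomial.aeval_C, Algebra.algebraMap_self, RingHom.id_apply] at h0
    rcases mul_eq_zero.1 h0 with h | h
    · exact sub_eq_zero.1 h
    · exact absurd h hga

theorem coord_sets_eq_of_charpoly_eq (K : Type*) [Field K] [IsAlgClosed K] (n : ℕ)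
    (I : Ideal (MvPolynomial (Fin n) K)) (hI : I.IsRadical)
    [FiniteDimensional K (MvPolynomial (Fin n) K ⧸ I)]
    [Nontrivial (MvPolynomial (Fin n) K ⧸ I)]
    (i j : Fin n)
    (h : LinearMap.charpoly
          (LinearMap.mulLeft K (Ideal.Quotient.mk I (MvPolynomial.X i)) :
            Module.End K (MvPolynomial (Fin n) K ⧸ I)) =
         LinearMap.charpoly
          (LinearMap.mulLeft K (Ideal.Quotient.mk I (MvPolynomial.X j)) :
            Module.End K (MvPolynomial (Fin n) K ⧸ I))) :
    {x : K | ∃ a ∈ MvPolynomial.zeroLocus K I, a i = x} =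
    {x : K | ∃ a ∈ MvPolynomial.zeroLocus K I, a j = x} := by
  ext x
  simp only [Set.mem_setOf_eq]
  rw [coord_iff_isRoot K n I hI i x, coord_iff_isRoot K n I hI j x, h]
end

section
/- Let K be a field, n a natural number, and I an ideal of K[x_1,...,x_n] whose quotient K[x_1,...,x_n]/I is a finite-dimensional K-vector space. If σ ∈ Dec(I), then for every index i ∈ {1,...,n} the characteristic polynomial of the multiplication operator m_{x_{σ(i)}} on K[x_1,...,x_n]/I equals the characteristic polynomial of m_{x_i}. (Consequently a permutation in Dec(I) preserves each block of the partition of {1,...,n} determined by equality of these characteristic polynomials.) -/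
theorem dec_preserves_charpoly (K : Type*) [Field K] (n : ℕ)
    (I : Ideal (MvPolynomial (Fin n) K))
    [FiniteDimensional K (MvPolynomial (Fin n) K ⧸ I)]
    (σ : Equiv.Perm (Fin n))
    (hσ : ∀ f ∈ I, MvPolynomial.rename (σ : Fin n → Fin n) f ∈ I) :
    ∀ i : Fin n,
      LinearMap.charpoly
        (LinearMap.mulLeft K (Ideal.Quotient.mk I (MvPolynomial.X (σ i))) :
          Module.End K (MvPolynomial (Fin n) K ⧸ I)) =
      LinearMap.charpoly
        (LinearMap.mulLeft K (Ideal.Quotient.mk I (MvPolynomial.X i)) :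
          Module.End K (MvPolynomial (Fin n) K ⧸ I)) := by
  intro i
  -- powers of σ preserve I
  have hpow : ∀ k : ℕ, ∀ f ∈ I, MvPolynomial.rename ((σ ^ k : Equiv.Perm (Fin n)) : Fin n → Fin n) f ∈ I := by
    intro k
    induction k with
    | zero => intro f hf; simpa using hf
    | succ k ih =>
      intro f hf
      have := hσ _ (ih f hf)
      rw [MvPolynomial.rename_rename] at this
      have hc : ((σ : Fin n → Fin n) ∘ ((σ ^ k : Equiv.Perm (Fin n)) : Fin n → Fin n))
          = ((σ ^ (k + 1) : Equiv.Perm (Fin n)) : Fin n → Fin n) := by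
        ext x
        simp [pow_succ', Equiv.Perm.mul_apply]
      rwa [hc] at this
  have hinv : ∀ f ∈ I, MvPolynomial.rename ((σ⁻¹ : Equiv.Perm (Fin n)) : Fin n → Fin n) f ∈ I := by
    have hσinv : σ⁻¹ = σ ^ (orderOf σ - 1) := by
      have h1 : 0 < orderOf σ := orderOf_pos σ
      have : σ * σ ^ (orderOf σ - 1) = 1 := by
        rw [← pow_succ', Nat.sub_add_cancel h1, pow_orderOf_eq_one]
      exact inv_eq_of_mul_eq_one_right this
    rw [hσinv]; exact hpow _
  -- the algebra equivalence on the quotient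
  have hmap : I.map (MvPolynomial.renameEquiv K σ : MvPolynomial (Fin n) K ≃ₐ[K] MvPolynomial (Fin n) K).toRingEquiv.toRingHom = I := by
    apply le_antisymm
    · rw [Ideal.map_le_iff_le_comap]
      intro f hf
      exact hσ f hf
    · intro f hf
      have : f = MvPolynomial.rename (σ : Fin n → Fin n)
          (MvPolynomial.rename ((σ⁻¹ : Equiv.Perm (Fin n)) : Fin n → Fin n) f) := by
        rw [MvPolynomial.rename_rename]
        have : ((σ : Fin n → Fin n) ∘ ((σ⁻¹ : Equiv.Perm (Fin n)) : Fin n → Fin n)) = id := by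
          ext x; simp
        rw [this, MvPolynomial.rename_id, AlgHom.id_apply]
      rw [this]
      exact Ideal.mem_map_of_mem _ (hinv f hf)
  let e : (MvPolynomial (Fin n) K ⧸ I) ≃ₐ[K] (MvPolynomial (Fin n) K ⧸ I) :=
    Ideal.quotientEquivAlg I I (MvPolynomial.renameEquiv K σ) hmap.symm
  have he : ∀ f, e (Ideal.Quotient.mk I f) = Ideal.Quotient.mk I (MvPolynomial.rename (σ : Fin n → Fin n) f) := by
    intro f; rfl
  -- conjugation identity
  have hconj : (e.toLinearEquiv.conj
      (LinearMap.mulLeft K (Ideal.Quotient.mk I (MvPolynomial.X i))))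
      = LinearMap.mulLeft K (Ideal.Quotient.mk I (MvPolynomial.X (σ i))) := by
    apply LinearMap.ext
    intro x
    obtain ⟨g, rfl⟩ := Ideal.Quotient.mk_surjective x
    rw [LinearEquiv.conj_apply]
    simp only [LinearMap.coe_comp, Function.comp_apply, LinearEquiv.coe_coe,
      LinearMap.mulLeft_apply]
    have hback : (e.toLinearEquiv.symm) (Ideal.Quotient.mk I g)
        = Ideal.Quotient.mk I (MvPolynomial.rename ((σ⁻¹ : Equiv.Perm (Fin n)) : Fin n → Fin n) g) := by
      apply e.toLinearEquiv.injective
      rw [LinearEquiv.apply_symm_apply]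
      rw [AlgEquiv.toLinearEquiv_apply, he, MvPolynomial.rename_rename]
      congr 1
      have : ((σ : Fin n → Fin n) ∘ ((σ⁻¹ : Equiv.Perm (Fin n)) : Fin n → Fin n)) = id := by
        ext x; simp
      rw [this, MvPolynomial.rename_id, AlgHom.id_apply]
    have hcomp : ((σ : Fin n → Fin n) ∘ ((σ⁻¹ : Equiv.Perm (Fin n)) : Fin n → Fin n)) = id := by
      ext x; simp
    rw [hback, AlgEquiv.toLinearEquiv_apply, ← map_mul, he, map_mul,
      MvPolynomial.rename_X, MvPolynomial.rename_rename, hcomp, MvPolynomial.rename_id, AlgHom.id_apply,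
      map_mul]
  rw [← hconj]
  exact LinearEquiv.charpoly_conj _ _
end

section
/- Let K be a field, n a natural number, and I an ideal of K[x_1,...,x_n] whose quotient K[x_1,...,x_n]/I is a finite-dimensional K-vector space. Fix a K-basis of K[x_1,...,x_n]/I and, for each i ∈ {1,...,n}, let M_i be the matrix of the multiplication operator m_{x_i} with respect to this basis. Introduce new variables t_1,...,t_n and form the matrix A = t_1·M_1 + ... + t_n·M_n with entries in the polynomial ring K[t_1,...,t_n], and let F = charpoly(A) be its characteristic polynomial, a polynomial in λ with coefficients in K[t_1,...,t_n]. If σ ∈ Dec(I), then F is invariant under the substitution t_i ↦ t_{σ(i)}; that is, applying the renaming t_i ↦ t_{σ(i)} to every coefficient of F yields F again. (This is the inclusion Dec(I) ⊆ Sym(F) proven in Theorem 3.1.) -/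
lemma charpoly_conj_aux {R ι : Type*} [CommRing R] [Fintype ι] [DecidableEq ι]
    (P Q A : Matrix ι ι R) (h1 : P * Q = 1) (h2 : Q * P = 1) :
    (P * A * Q).charpoly = A.charpoly := by
  have hscal : (Matrix.scalar ι (Polynomial.X : Polynomial R)) = (Polynomial.X : Polynomial R) • (1 : Matrix ι ι (Polynomial R)) := by
    rw [Matrix.scalar_apply, Matrix.smul_one_eq_diagonal]
  have hmapmul : ∀ (X Y : Matrix ι ι R), (X * Y).map (Polynomial.C : R →+* Polynomial R) = X.map Polynomial.C * Y.map Polynomial.C := by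
    intro X Y; exact Matrix.map_mul
  have key : Matrix.charmatrix (P * A * Q)
      = (P.map (Polynomial.C : R →+* Polynomial R)) * Matrix.charmatrix A *
        (Q.map (Polynomial.C : R →+* Polynomial R)) := by
    rw [Matrix.charmatrix, Matrix.charmatrix, Matrix.mul_sub, Matrix.sub_mul]
    simp only [RingHom.mapMatrix_apply]
    congr 1
    · rw [hscal, Matrix.mul_smul, Matrix.smul_mul, mul_one, ← hmapmul, h1, Matrix.map_one _ (map_zero _) (map_one _)]
    · rw [← hmapmul, ← hmapmul]
  rw [Matrix.charpoly, Matrix.charpoly, key, Matrix.det_mul, Matrix.det_mul]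
  have : (P.map (Polynomial.C : R →+* Polynomial R)).det * (Q.map (Polynomial.C : R →+* Polynomial R)).det = 1 := by
    rw [← Matrix.det_mul, ← hmapmul, h1, Matrix.map_one _ (map_zero _) (map_one _), Matrix.det_one]
  calc (P.map (Polynomial.C : R →+* Polynomial R)).det * (Matrix.charmatrix A).det *
      (Q.map (Polynomial.C : R →+* Polynomial R)).det
      = (Matrix.charmatrix A).det * ((P.map (Polynomial.C : R →+* Polynomial R)).det * (Q.map (Polynomial.C : R →+* Polynomial R)).det) := by ring
    _ = (Matrix.charmatrix A).det := by rw [this, mul_one]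


theorem dec_subset_sym_of_generic_charpoly (K : Type*) [Field K] (n : ℕ)
    (I : Ideal (MvPolynomial (Fin n) K))
    [FiniteDimensional K (MvPolynomial (Fin n) K ⧸ I)]
    (ι : Type*) [Fintype ι] [DecidableEq ι]
    (b : Module.Basis ι K (MvPolynomial (Fin n) K ⧸ I))
    (M : Fin n → Matrix ι ι K)
    (hM : ∀ i : Fin n, M i = LinearMap.toMatrix b b
      (LinearMap.mulLeft K (Ideal.Quotient.mk I (MvPolynomial.X i)) :
        Module.End K (MvPolynomial (Fin n) K ⧸ I)))
    (A : Matrix ι ι (MvPolynomial (Fin n) K))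
    (hA : A = ∑ i : Fin n, (MvPolynomial.X i : MvPolynomial (Fin n) K) • (M i).map (MvPolynomial.C : K →+* MvPolynomial (Fin n) K))
    (F : Polynomial (MvPolynomial (Fin n) K)) (hF : F = A.charpoly)
    (σ : Equiv.Perm (Fin n))
    (hσ : ∀ f ∈ I, MvPolynomial.rename (σ : Fin n → Fin n) f ∈ I) :
    F.map ((MvPolynomial.rename (σ : Fin n → Fin n) :
        MvPolynomial (Fin n) K →ₐ[K] MvPolynomial (Fin n) K) :
        MvPolynomial (Fin n) K →+* MvPolynomial (Fin n) K) = F := by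
  classical
  set ψ : MvPolynomial (Fin n) K →ₐ[K] MvPolynomial (Fin n) K := MvPolynomial.rename (σ : Fin n → Fin n) with hψ
  -- induced algebra endomorphism of the quotient
  obtain ⟨φ, hφmk⟩ : ∃ φ : (MvPolynomial (Fin n) K ⧸ I) →ₐ[K] (MvPolynomial (Fin n) K ⧸ I),
      ∀ f : MvPolynomial (Fin n) K, φ (Ideal.Quotient.mk I f) = Ideal.Quotient.mk I (ψ f) := by
    have hlift : ∀ f ∈ I, ((Ideal.Quotient.mkₐ K I).comp ψ) f = 0 := by
      intro f hf
      simp only [AlgHom.comp_apply, Ideal.Quotient.mkₐ_eq_mk]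
      exact Ideal.Quotient.eq_zero_iff_mem.2 (hσ f hf)
    exact ⟨Ideal.Quotient.liftₐ I ((Ideal.Quotient.mkₐ K I).comp ψ) hlift, fun f => by
      simp [Ideal.Quotient.liftₐ_apply]
      exact Ideal.Quotient.lift_mk _ _ _⟩
  have hsurj : Function.Surjective φ := by
    intro y
    obtain ⟨g, rfl⟩ := Ideal.Quotient.mk_surjective y
    refine ⟨Ideal.Quotient.mk I (MvPolynomial.rename (σ.symm : Fin n → Fin n) g), ?_⟩
    rw [hφmk]
    congr 1
    rw [hψ]
    rw [MvPolynomial.rename_rename]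
    have hid : ((σ : Fin n → Fin n) ∘ (σ.symm : Fin n → Fin n)) = id := by
      ext x; simp
    rw [hid, MvPolynomial.rename_id, AlgHom.id_apply]
  have hinj : Function.Injective φ :=
    (LinearMap.injective_iff_surjective (f := φ.toLinearMap)).2 hsurj
  -- a two-sided linear inverse of φ
  obtain ⟨g, hg1, hg2⟩ : ∃ g : (MvPolynomial (Fin n) K ⧸ I) →ₗ[K] (MvPolynomial (Fin n) K ⧸ I),
      g ∘ₗ φ.toLinearMap = LinearMap.id ∧ φ.toLinearMap ∘ₗ g = LinearMap.id := by
    let e : (MvPolynomial (Fin n) K ⧸ I) ≃ₗ[K] (MvPolynomial (Fin n) K ⧸ I) :=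
      LinearEquiv.ofBijective φ.toLinearMap ⟨hinj, hsurj⟩
    have hce : (e : (MvPolynomial (Fin n) K ⧸ I) →ₗ[K] (MvPolynomial (Fin n) K ⧸ I)) = φ.toLinearMap := rfl
    refine ⟨(e.symm : (MvPolynomial (Fin n) K ⧸ I) →ₗ[K] (MvPolynomial (Fin n) K ⧸ I)), ?_, ?_⟩
    · rw [← hce, LinearEquiv.comp_coe, LinearEquiv.self_trans_symm, LinearEquiv.refl_toLinearMap]
    · rw [← hce, LinearEquiv.comp_coe, LinearEquiv.symm_trans_self, LinearEquiv.refl_toLinearMap]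
  set P : Matrix ι ι K := LinearMap.toMatrix b b φ.toLinearMap with hP
  set Q : Matrix ι ι K := LinearMap.toMatrix b b g with hQ
  have hQP : Q * P = 1 := by
    rw [hQ, hP, ← LinearMap.toMatrix_comp b b b, hg1, LinearMap.toMatrix_id]
  have hPQ : P * Q = 1 := by
    rw [hQ, hP, ← LinearMap.toMatrix_comp b b b, hg2, LinearMap.toMatrix_id]
  -- commutation relation
  have hcomm : ∀ j : Fin n, P * M j = M (σ j) * P := by
    intro j
    rw [hP, hM, hM, ← LinearMap.toMatrix_comp b b b, ← LinearMap.toMatrix_comp b b b]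
    congr 1
    refine LinearMap.ext fun v => ?_
    obtain ⟨w, rfl⟩ := Ideal.Quotient.mk_surjective v
    simp only [LinearMap.comp_apply, LinearMap.mulLeft_apply, AlgHom.toLinearMap_apply]
    rw [map_mul, hφmk]
    congr 2
    simp [hψ]
  have hconj : ∀ j : Fin n, M (σ.symm j) = Q * M j * P := by
    intro j
    have h := hcomm (σ.symm j)
    rw [Equiv.apply_symm_apply] at h
    calc M (σ.symm j) = (Q * P) * M (σ.symm j) := by rw [hQP, one_mul]
      _ = Q * (P * M (σ.symm j)) := by rw [mul_assoc]
      _ = Q * (M j * P) := by rw [h]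
      _ = Q * M j * P := by rw [mul_assoc]
  -- compute the entrywise image of A
  have hAmap : A.map (ψ : MvPolynomial (Fin n) K →+* MvPolynomial (Fin n) K)
      = (Q.map (MvPolynomial.C : K →+* MvPolynomial (Fin n) K)) * A *
        (P.map (MvPolynomial.C : K →+* MvPolynomial (Fin n) K)) := by
    have step1 : A.map (ψ : MvPolynomial (Fin n) K →+* MvPolynomial (Fin n) K)
        = ∑ i : Fin n, (MvPolynomial.X (σ i) : MvPolynomial (Fin n) K) • (M i).map (MvPolynomial.C : K →+* MvPolynomial (Fin n) K) := by
      rw [hA]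
      ext k l
      simp [Matrix.map_apply, Matrix.sum_apply, Matrix.smul_apply, smul_eq_mul, map_sum,
        map_mul, hψ]
    have step2 : ∑ i : Fin n, (MvPolynomial.X (σ i) : MvPolynomial (Fin n) K) • (M i).map (MvPolynomial.C : K →+* MvPolynomial (Fin n) K)
        = ∑ j : Fin n, (MvPolynomial.X j : MvPolynomial (Fin n) K) • (M (σ.symm j)).map (MvPolynomial.C : K →+* MvPolynomial (Fin n) K) := by
      refine Fintype.sum_equiv σ _ _ fun i => ?_
      rw [Equiv.symm_apply_apply]
    have step3 : ∑ j : Fin n, (MvPolynomial.X j : MvPolynomial (Fin n) K) • (M (σ.symm j)).map (MvPolynomial.C : K →+* MvPolynomial (Fin n) K)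
        = (Q.map (MvPolynomial.C : K →+* MvPolynomial (Fin n) K)) * A *
          (P.map (MvPolynomial.C : K →+* MvPolynomial (Fin n) K)) := by
      rw [hA, Finset.mul_sum, Finset.sum_mul]
      refine Finset.sum_congr rfl fun j _ => ?_
      rw [hconj j, Matrix.map_mul, Matrix.map_mul, Matrix.mul_smul, Matrix.smul_mul, mul_assoc]
    rw [step1, step2, step3]
  have hQPC : Q.map (MvPolynomial.C : K →+* MvPolynomial (Fin n) K) * P.map (MvPolynomial.C : K →+* MvPolynomial (Fin n) K) = 1 := by
    rw [← Matrix.map_mul, hQP, Matrix.map_one _ (map_zero _) (map_one _)]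
  have hPQC : P.map (MvPolynomial.C : K →+* MvPolynomial (Fin n) K) * Q.map (MvPolynomial.C : K →+* MvPolynomial (Fin n) K) = 1 := by
    rw [← Matrix.map_mul, hPQ, Matrix.map_one _ (map_zero _) (map_one _)]
  rw [hF, ← Matrix.charpoly_map, hAmap]
  exact charpoly_conj_aux _ _ _ hQPC hPQC
end
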